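/- The RS-game (N₀, v) corresponding to an RS-situation is strictly monotone increasing: for all coalitions S ⊊ T ⊆ N₀ such that T contains at least one retailer (T ∩ N ≠ ∅), v(S) < v(T). -/
import Mathlib


open Finset

/-- An RS-situation with `n` retailers; the supplier is treated separately.
`c` is the unit production cost, `w` the wholesale price function and
`p i` the expected price function of retailer `i`.  All price functions are
decreasing and continuous on `[0, ∞)`, `w` exceeds `c` everywhere,
`p i 0 > w 0` and `p i` reaches the value `c` at some positive quantity. -/
structure RSSituation (n : ℕ) where
  c : ℝ
  w : ℝ → ℝ
  p : Fin n → ℝ → ℝ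
  w_anti : ∀ ⦃q q' : ℝ⦄, 0 ≤ q → q ≤ q' → w q' ≤ w q
  w_cont : ContinuousOn w (Set.Ici 0)
  w_gt_c : ∀ q : ℝ, 0 ≤ q → c < w q
  p_anti : ∀ i : Fin n, ∀ ⦃q q' : ℝ⦄, 0 ≤ q → q ≤ q' → p i q' ≤ p i q
  p_cont : ∀ i : Fin n, ContinuousOn (p i) (Set.Ici 0)
  p_zero_gt : ∀ i : Fin n, w 0 < p i 0
  exists_eq_c : ∀ i : Fin n, ∃ q : ℝ, 0 < q ∧ p i q = c

namespace RSSituation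

variable {n : ℕ}

/-- The feasible set `Q^S ⊆ [0,∞)^S` of order vectors for a coalition `S` of retailers. -/
def QSet (R : RSSituation n) (S : Finset (Fin n)) : Set (S → ℝ) :=
  {q | ∀ i : S, 0 ≤ q i ∧ R.w (∑ j : S, q j) ≤ R.p i.1 (q i)}

/-- The joint profit `∑_{i ∈ S} (p_i(q_i) - w(q_S)) q_i` of a coalition `S` of retailers. -/
def coalProfit (R : RSSituation n) (S : Finset (Fin n)) (q : S → ℝ) : ℝ :=
  ∑ i : S, (R.p i.1 (q i) - R.w (∑ j : S, q j)) * q i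

/-- `q` is an optimal order vector for the coalition `S` of retailers. -/
def IsCoalOpt (R : RSSituation n) (S : Finset (Fin n)) (q : S → ℝ) : Prop :=
  q ∈ R.QSet S ∧ ∀ q' ∈ R.QSet S, R.coalProfit S q' ≤ R.coalProfit S q

/-- The feasible set of order quantities of retailer `i` at unit price `c`. -/
def QcSet (R : RSSituation n) (i : Fin n) : Set ℝ :=
  {q | 0 ≤ q ∧ R.c ≤ R.p i q}

/-- The profit `(p_i(q) - c) q` of retailer `i` at unit price `c`. -/
def indProfit (R : RSSituation n) (i : Fin n) (q : ℝ) : ℝ :=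
  (R.p i q - R.c) * q

/-- `q` is an optimal order quantity for retailer `i` at unit price `c`. -/
def IsIndOpt (R : RSSituation n) (i : Fin n) (q : ℝ) : Prop :=
  q ∈ R.QcSet i ∧ ∀ q' ∈ R.QcSet i, R.indProfit i q' ≤ R.indProfit i q

/-- `v` is the RS-game determined by chosen optimal order vectors `qS S`
(for each retailer coalition `S`) and `qc i` (for each retailer `i`, when
cooperating with the supplier).  Players: `none` is the supplier `0`,
`some i` is retailer `i`. -/
def IsRSGame (R : RSSituation n) (qS : (S : Finset (Fin n)) → (S → ℝ))
    (qc : Fin n → ℝ) (v : Finset (Option (Fin n)) → ℝ) : Prop :=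
  v ∅ = 0 ∧ v {none} = 0 ∧
    (∀ S : Finset (Fin n), S.Nonempty → v (S.image some) = R.coalProfit S (qS S)) ∧
    (∀ S : Finset (Fin n), S.Nonempty →
      v (insert none (S.image some)) = ∑ i ∈ S, R.indProfit i (qc i))

/-- The core of a TU game on the player set `N₀ = Option (Fin n)`. -/
def core (v : Finset (Option (Fin n)) → ℝ) : Set (Option (Fin n) → ℝ) :=
  {x | ∑ i : Option (Fin n), x i = v Finset.univ ∧
    ∀ T : Finset (Option (Fin n)), v T ≤ ∑ i ∈ T, x i}

end RSSituation


namespace RSAux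
open RSSituation Filter

variable {n : ℕ}

/-- extension of a coalition order vector by zero -/
def extq (S : Finset (Fin n)) (q : S → ℝ) : Fin n → ℝ := fun i => if h : i ∈ S then q ⟨i, h⟩ else 0

lemma extq_coe (S : Finset (Fin n)) (q : S → ℝ) (i : S) : extq S q i = q i := by
  simp [extq]

lemma sum_coe (S : Finset (Fin n)) (q : S → ℝ) : ∑ j : S, q j = ∑ j ∈ S, extq S q j := by
  rw [← Finset.sum_coe_sort S (extq S q)]
  exact Finset.sum_congr rfl fun i _ => (extq_coe S q i).symm

lemma coalProfit_eq (R : RSSituation n) (S : Finset (Fin n)) (q : S → ℝ) :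
    R.coalProfit S q
      = ∑ i ∈ S, (R.p i (extq S q i) - R.w (∑ j ∈ S, extq S q j)) * extq S q i := by
  rw [coalProfit, sum_coe S q,
    ← Finset.sum_coe_sort S
      (fun i => (R.p i (extq S q i) - R.w (∑ j ∈ S, extq S q j)) * extq S q i)]
  exact Finset.sum_congr rfl fun i _ => by rw [extq_coe]

lemma mem_QSet_iff (R : RSSituation n) (S : Finset (Fin n)) (q : S → ℝ) :
    q ∈ R.QSet S ↔
      ∀ i ∈ S, 0 ≤ extq S q i ∧ R.w (∑ j ∈ S, extq S q j) ≤ R.p i (extq S q i) := by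
  rw [QSet, Set.mem_setOf_eq, ← sum_coe]
  constructor
  · intro h i hi
    simpa [extq, hi] using h ⟨i, hi⟩
  · intro h i
    simpa [extq, i.2] using h i.1 i.2

lemma exists_pos_p_gt (R : RSSituation n) (j : Fin n) {a : ℝ} (ha : a < R.p j 0) :
    ∃ t : ℝ, 0 < t ∧ a < R.p j t := by
  have hc : ContinuousWithinAt (R.p j) (Set.Ici 0) 0 := (R.p_cont j) 0 Set.self_mem_Ici
  have ht : Filter.Tendsto (R.p j) (nhdsWithin 0 (Set.Ioi 0)) (nhds (R.p j 0)) :=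
    hc.tendsto.mono_left (nhdsWithin_mono _ Set.Ioi_subset_Ici_self)
  have h1 : ∀ᶠ t in nhdsWithin (0:ℝ) (Set.Ioi 0), a < R.p j t :=
    ht.eventually (eventually_gt_nhds ha)
  have h2 : ∀ᶠ t in nhdsWithin (0:ℝ) (Set.Ioi 0), 0 < t := eventually_mem_nhdsWithin
  obtain ⟨t, h1t, h2t⟩ := (h1.and h2).exists
  exact ⟨t, h2t, h1t⟩

lemma indPos (R : RSSituation n) (qc : Fin n → ℝ) (hqc : ∀ i, R.IsIndOpt i (qc i))
    (i : Fin n) : 0 < R.indProfit i (qc i) := by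
  have hci : R.c < R.p i 0 := lt_trans (R.w_gt_c 0 le_rfl) (R.p_zero_gt i)
  obtain ⟨t, ht0, htp⟩ := exists_pos_p_gt R i hci
  have htQ : t ∈ R.QcSet i := ⟨ht0.le, htp.le⟩
  have : (0:ℝ) < R.indProfit i t := mul_pos (sub_pos.2 htp) ht0
  exact lt_of_lt_of_le this ((hqc i).2 t htQ)

lemma extend_lt (R : RSSituation n) (A B : Finset (Fin n)) (hAB : A ⊆ B) (j : Fin n)
    (hjB : j ∈ B) (hjA : j ∉ A) (q : A → ℝ) (hq : q ∈ R.QSet A) :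
    ∃ q' ∈ R.QSet B, R.coalProfit A q < R.coalProfit B q' := by
  set f := extq A q with hf
  set QA := ∑ i ∈ A, f i with hQA
  have hmem := (mem_QSet_iff R A q).1 hq
  have hfnn : ∀ i, 0 ≤ f i := by
    intro i
    by_cases h : i ∈ A
    · exact (hmem i h).1
    · simp [hf, extq, h]
  have hQAnn : 0 ≤ QA := Finset.sum_nonneg fun i _ => hfnn i
  have hfeas : ∀ i ∈ A, R.w QA ≤ R.p i (f i) := fun i hi => (hmem i hi).2
  obtain ⟨t, ht0, htp⟩ := exists_pos_p_gt R j (R.p_zero_gt j)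
  set g : Fin n → ℝ := fun i => if i ∈ A then f i else if i = j then t else 0 with hg
  have hgnn : ∀ i, 0 ≤ g i := by
    intro i
    by_cases h : i ∈ A
    · simpa [hg, h] using hfnn i
    · by_cases h' : i = j
      · subst h'; simp [hg, hjA, ht0.le]
      · simp [hg, h, h']
  set q' : {x // x ∈ B} → ℝ := fun i => g i.1 with hq'
  have hext : ∀ i ∈ B, extq B q' i = g i := by
    intro i hi; simp [extq, hi, hq']
  have hins : insert j A ⊆ B := Finset.insert_subset hjB hAB
  have hsumB : ∑ i ∈ B, extq B q' i = t + QA := by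
    rw [Finset.sum_congr rfl hext,
      ← Finset.sum_subset hins (fun x hx hnx => by
        simp only [Finset.mem_insert, not_or] at hnx
        simp [hg, hnx.2, hnx.1]),
      Finset.sum_insert hjA]
    congr 1
    · simp [hg, hjA]
    · exact Finset.sum_congr rfl fun i hi => by simp [hg, hi]
  have htQAnn : (0:ℝ) ≤ t + QA := by positivity
  have hwle : R.w (t + QA) ≤ R.w QA := R.w_anti hQAnn (le_add_of_nonneg_left ht0.le)
  have hwle0 : R.w (t + QA) ≤ R.w 0 := R.w_anti le_rfl htQAnn
  have hq'mem : q' ∈ R.QSet B := by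
    rw [mem_QSet_iff, hsumB]
    intro i hi
    rw [hext i hi]
    refine ⟨hgnn i, ?_⟩
    by_cases h : i ∈ A
    · simpa [hg, h] using le_trans hwle (hfeas i h)
    · by_cases h' : i = j
      · subst h'
        simp only [hg, if_neg h, if_pos rfl]
        exact le_trans hwle0 htp.le
      · simp only [hg, if_neg h, if_neg h']
        exact le_trans hwle0 (R.p_zero_gt i).le
  refine ⟨q', hq'mem, ?_⟩
  have hprofB : R.coalProfit B q'
      = (R.p j t - R.w (t + QA)) * t + ∑ i ∈ A, (R.p i (f i) - R.w (t + QA)) * f i := by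
    rw [coalProfit_eq, hsumB, Finset.sum_congr rfl (fun i hi => by rw [hext i hi]),
      ← Finset.sum_subset hins (fun x hx hnx => by
        simp only [Finset.mem_insert, not_or] at hnx
        simp [hg, hnx.2, hnx.1]),
      Finset.sum_insert hjA]
    congr 1
    · simp [hg, hjA]
    · exact Finset.sum_congr rfl fun i hi => by simp [hg, hi]
  have hprofA : R.coalProfit A q = ∑ i ∈ A, (R.p i (f i) - R.w QA) * f i := coalProfit_eq R A q
  rw [hprofA, hprofB]
  have h1 : ∑ i ∈ A, (R.p i (f i) - R.w QA) * f i
      ≤ ∑ i ∈ A, (R.p i (f i) - R.w (t + QA)) * f i :=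
    Finset.sum_le_sum fun i _ =>
      mul_le_mul_of_nonneg_right (sub_le_sub_left hwle _) (hfnn i)
  have h2 : (0:ℝ) < (R.p j t - R.w (t + QA)) * t :=
    mul_pos (sub_pos.2 (lt_of_le_of_lt hwle0 htp)) ht0
  linarith

lemma isCoalOpt_all (R : RSSituation n) (qS : (S : Finset (Fin n)) → (S → ℝ))
    (hqS : ∀ S : Finset (Fin n), S.Nonempty → R.IsCoalOpt S (qS S)) :
    ∀ A : Finset (Fin n), R.IsCoalOpt A (qS A) := by
  intro A
  rcases A.eq_empty_or_nonempty with h | h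
  · subst h
    constructor
    · intro i; exact absurd i.2 (Finset.notMem_empty _)
    · intro q' _
      simp [RSSituation.coalProfit]
  · exact hqS A h

lemma coal_lt_ind (R : RSSituation n) (qc : Fin n → ℝ) (hqc : ∀ i, R.IsIndOpt i (qc i))
    (S B : Finset (Fin n)) (hSB : S ⊆ B) (hB : B.Nonempty) (q : S → ℝ) (hq : q ∈ R.QSet S) :
    R.coalProfit S q < ∑ i ∈ B, R.indProfit i (qc i) := by
  set f := extq S q with hf
  set QS := ∑ i ∈ S, f i with hQS
  have hmem := (mem_QSet_iff R S q).1 hq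
  have hQSnn : 0 ≤ QS := Finset.sum_nonneg fun i hi => (hmem i hi).1
  have hwc : R.c < R.w QS := R.w_gt_c QS hQSnn
  have hper : ∀ i ∈ S, (R.p i (f i) - R.w QS) * f i < R.indProfit i (qc i) := by
    intro i hi
    rcases (hmem i hi).1.eq_or_lt with h0 | h0
    · have hz : f i = 0 := h0.symm
      rw [hz, mul_zero]
      exact indPos R qc hqc i
    · have hlt : (R.p i (f i) - R.w QS) * f i < (R.p i (f i) - R.c) * f i :=
        mul_lt_mul_of_pos_right (sub_lt_sub_left hwc _) h0
      have hQc : f i ∈ R.QcSet i := ⟨h0.le, le_trans hwc.le (hmem i hi).2⟩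
      exact lt_of_lt_of_le hlt ((hqc i).2 (f i) hQc)
  rw [coalProfit_eq]
  rcases S.eq_empty_or_nonempty with hS | hS
  · subst hS
    simpa using Finset.sum_pos (fun i _ => indPos R qc hqc i) hB
  · calc ∑ i ∈ S, (R.p i (f i) - R.w QS) * f i
        < ∑ i ∈ S, R.indProfit i (qc i) := Finset.sum_lt_sum_of_nonempty hS hper
      _ ≤ ∑ i ∈ B, R.indProfit i (qc i) :=
        Finset.sum_le_sum_of_subset_of_nonneg hSB fun i _ _ => (indPos R qc hqc i).le

lemma eq_image_some {T : Finset (Option (Fin n))} (h : none ∉ T) :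
    T = T.eraseNone.image some := by
  ext x
  cases x with
  | none => simp [h]
  | some a => simp [Finset.mem_eraseNone]

lemma eq_insert_none {T : Finset (Option (Fin n))} (h : none ∈ T) :
    T = insert none (T.eraseNone.image some) := by
  ext x
  cases x with
  | none => simp [h]
  | some a => simp [Finset.mem_eraseNone]

end RSAux

/-- RS-games are strictly monotone increasing (for strict inclusions whose
larger coalition contains at least one retailer). -/
theorem rs_game_strict_monotone (n : ℕ) (R : RSSituation n)
    (qS : (S : Finset (Fin n)) → (S → ℝ)) (qc : Fin n → ℝ)
    (hqS : ∀ S : Finset (Fin n), S.Nonempty → R.IsCoalOpt S (qS S))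
    (hqc : ∀ i : Fin n, R.IsIndOpt i (qc i))
    (v : Finset (Option (Fin n)) → ℝ) (hv : R.IsRSGame qS qc v) :
    ∀ S T : Finset (Option (Fin n)), S ⊂ T → (∃ i : Fin n, some i ∈ T) →
      v S < v T := by
  classical
  obtain ⟨hv0, hvn, hvS, hvS0⟩ := hv
  have hopt : ∀ A : Finset (Fin n), R.IsCoalOpt A (qS A) := RSAux.isCoalOpt_all R qS hqS
  have hvimg : ∀ C : Finset (Fin n), v (C.image some) = R.coalProfit C (qS C) := by
    intro C
    rcases C.eq_empty_or_nonempty with h | h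
    · subst h
      simp [hv0, RSSituation.coalProfit]
    · exact hvS C h
  intro S T hST hT
  have hAB : S.eraseNone ⊆ T.eraseNone := by
    intro a ha
    exact Finset.mem_eraseNone.2 (hST.subset (Finset.mem_eraseNone.1 ha))
  obtain ⟨i0, hi0⟩ := hT
  have hBne : T.eraseNone.Nonempty := ⟨i0, Finset.mem_eraseNone.2 hi0⟩
  by_cases hnT : none ∈ T
  · have hTeq := RSAux.eq_insert_none hnT
    have hvT : v T = ∑ i ∈ T.eraseNone, R.indProfit i (qc i) := by
      have h := hvS0 T.eraseNone hBne
      rwa [← hTeq] at h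
    by_cases hnS : none ∈ S
    · have hSeq := RSAux.eq_insert_none hnS
      have hABne : S.eraseNone ≠ T.eraseNone := by
        intro h
        exact hST.ne (by rw [hSeq, hTeq, h])
      obtain ⟨j, hjB, hjA⟩ := Finset.exists_of_ssubset (lt_of_le_of_ne hAB hABne)
      rcases S.eraseNone.eq_empty_or_nonempty with hA | hA
      · have hS1 : S = {none} := by rw [hA] at hSeq; simpa using hSeq
        rw [hS1, hvn, hvT]
        exact Finset.sum_pos (fun i _ => RSAux.indPos R qc hqc i) hBne
      · have hvS' : v S = ∑ i ∈ S.eraseNone, R.indProfit i (qc i) := by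
          have h := hvS0 S.eraseNone hA
          rwa [← hSeq] at h
        rw [hvS', hvT]
        exact Finset.sum_lt_sum_of_subset hAB hjB hjA (RSAux.indPos R qc hqc j)
          (fun k _ _ => (RSAux.indPos R qc hqc k).le)
    · have hSeq := RSAux.eq_image_some hnS
      have hvS' : v S = R.coalProfit S.eraseNone (qS S.eraseNone) := by
        have h := hvimg S.eraseNone
        rwa [← hSeq] at h
      rw [hvS', hvT]
      exact RSAux.coal_lt_ind R qc hqc _ _ hAB hBne (qS S.eraseNone) (hopt S.eraseNone).1
  · have hnS : none ∉ S := fun h => hnT (hST.subset h)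
    have hSeq := RSAux.eq_image_some hnS
    have hTeq := RSAux.eq_image_some hnT
    have hABne : S.eraseNone ≠ T.eraseNone := by
      intro h
      exact hST.ne (by rw [hSeq, hTeq, h])
    obtain ⟨j, hjB, hjA⟩ := Finset.exists_of_ssubset (lt_of_le_of_ne hAB hABne)
    obtain ⟨q', hq', hlt⟩ :=
      RSAux.extend_lt R _ _ hAB j hjB hjA (qS S.eraseNone) (hopt S.eraseNone).1
    have hvS' : v S = R.coalProfit S.eraseNone (qS S.eraseNone) := by
      have h := hvimg S.eraseNone
      rwa [← hSeq] at h
    have hvT' : v T = R.coalProfit T.eraseNone (qS T.eraseNone) := by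
      have h := hvimg T.eraseNone
      rwa [← hTeq] at h
    rw [hvS', hvT']
    exact lt_of_lt_of_le hlt ((hopt T.eraseNone).2 q' hq')
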